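/- arXiv:1712.08532 — 3 statements merged into one kernel-verified Lean document; each statement's English description precedes it below -/
import Mathlib

section
/- Let μ > λ ≥ |L| + ℵ₀ be cardinals with μ regular, and let M be an L-structure generated by a sequence (b_i)_{i<κ} (κ ≥ μ) that is quantifier-free indiscernible over ∅. Then for any sequence (a_j)_{j<μ} of distinct elements of M and any set A ⊆ M with |A| < μ, there is a subsequence of (a_j)_{j<μ} of length μ that is quantifier-free indiscernible over A. -/
open FirstOrder Cardinal

/-- `b` and `c` realize the same quantifier-free type over `A`. -/
def SameQFType (L : FirstOrder.Language) {M : Type*} [L.Structure M] (A : Set M)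
    {n : ℕ} (b c : Fin n → M) : Prop :=
  ∀ (m : ℕ) (as : Fin m → A) (φ : L.Formula (Fin n ⊕ Fin m)), φ.IsQF →
    (φ.Realize (Sum.elim b (fun i => (as i : M))) ↔
      φ.Realize (Sum.elim c (fun i => (as i : M))))

/-- `(a i)` is quantifier-free indiscernible over `A`: any two finite subsequences of distinct
entries of the same length realize the same quantifier-free type over `A`. -/
def QFIndiscernible (L : FirstOrder.Language) {M : Type*} [L.Structure M] (A : Set M)
    {ι : Type*} (a : ι → M) : Prop :=
  ∀ (n : ℕ) (f g : Fin n → ι), Function.Injective f → Function.Injective g →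
    SameQFType L A (a ∘ f) (a ∘ g)

lemma isQF_subst {L : FirstOrder.Language} {α β : Type*} {n : ℕ}
    {φ : L.BoundedFormula α n} (h : φ.IsQF) (f : α → L.Term β) :
    (φ.subst f).IsQF := by
  induction h with
  | falsum => exact Language.BoundedFormula.isQF_bot
  | of_isAtomic h =>
    cases h with
    | equal t₁ t₂ => exact (Language.BoundedFormula.IsAtomic.equal _ _).isQF
    | rel R ts => exact (Language.BoundedFormula.IsAtomic.rel _ _).isQF
  | imp h1 h2 ih1 ih2 => exact ih1.imp ih2

lemma rep_exists {L : FirstOrder.Language.{u,u}} {M : Type u} [L.Structure M] {ι : Type u}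
    (b : ι → M)
    (hgen : FirstOrder.Language.Substructure.closure L (Set.range b) = ⊤) (x : M) :
    ∃ (n : ℕ) (t : L.Term (Fin n)) (v : Fin n → ι), Function.Injective v ∧
      t.realize (b ∘ v) = x := by
  classical
  have hx : x ∈ Language.Substructure.closure L (Set.range b) := hgen ▸ trivial
  obtain ⟨t, ht⟩ := Language.Substructure.mem_closure_iff_exists_term.1 hx
  choose g hg using fun y : Set.range b => y.2
  have hbg : (b ∘ g) = ((↑) : Set.range b → M) := funext fun y => hg y
  set t1 : L.Term ι := t.relabel g with ht1
  have ht1r : t1.realize b = x := by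
    rw [ht1, Language.Term.realize_relabel, hbg, ht]
  set s : Set ι := ↑t1.varFinset with hs
  have hsub : ↑t1.varFinset ⊆ s := subset_rfl
  set t2 := t1.restrictVar (Set.inclusion hsub) with ht2
  have ht2r : ∀ v : ι → M, t2.realize (v ∘ (↑)) = t1.realize v := fun v =>
    Language.Term.realize_restrictVar' hsub
  set e : t1.varFinset ≃ Fin t1.varFinset.card := t1.varFinset.equivFin with he
  refine ⟨t1.varFinset.card, t2.relabel e, Subtype.val ∘ e.symm,
    Subtype.val_injective.comp e.symm.injective, ?_⟩
  rw [Language.Term.realize_relabel]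
  have : (b ∘ (Subtype.val ∘ ⇑e.symm)) ∘ ⇑e = b ∘ ((↑) : s → ι) := by
    funext y; simp
  rw [this, ht2r b, ht1r]


lemma delta_system {ι' : Type u} [DecidableEq ι'] (μ : Cardinal.{u}) (hreg : μ.IsRegular) (hμ : ℵ₀ < μ) :
    ∀ (n : ℕ) (J : Type u) (s : J → Finset ι'), μ ≤ #J → (∀ j, (s j).card ≤ n) →
    ∃ (r : Finset ι') (X : Set J), μ ≤ #X ∧
      ∀ j ∈ X, ∀ j' ∈ X, j ≠ j' → s j ∩ s j' = r := by
  intro n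
  induction n with
  | zero =>
    intro J s hJ hcard
    refine ⟨∅, Set.univ, by simpa using hJ, fun j _ j' _ _ => ?_⟩
    have h1 : s j = ∅ := Finset.card_eq_zero.1 (le_antisymm (hcard j) (Nat.zero_le _))
    simp [h1]
  | succ n ih =>
    intro J s hJ hcard
    by_cases hbig : ∃ x : ι', μ ≤ #{j : J | x ∈ s j}
    · obtain ⟨x, hx⟩ := hbig
      obtain ⟨r', X', hX', hpair⟩ := ih {j : J | x ∈ s j}
        (fun j => (s j.1).erase x) hx (fun j => by
          have h1 := hcard j.1
          rw [Finset.card_erase_of_mem j.2]; omega)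
      refine ⟨insert x r', Subtype.val '' X', ?_, ?_⟩
      · rwa [Cardinal.mk_image_eq Subtype.val_injective]
      · rintro _ ⟨j, hj, rfl⟩ _ ⟨j', hj', rfl⟩ hne
        have hne' : j ≠ j' := fun h => hne (by rw [h])
        have key : (s j.1) ∩ (s j'.1) =
            insert x (((s j.1).erase x) ∩ ((s j'.1).erase x)) := by
          ext y
          by_cases hyx : y = x
          · subst hyx; simp; exact ⟨j.2, j'.2⟩
          · simp [hyx, Finset.mem_erase]
        rw [key, hpair j hj j' hj' hne']
    · push_neg at hbig
      obtain ⟨X, hXmax⟩ := zorn_subset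
        {X : Set J | X.Pairwise fun j j' => Disjoint (s j) (s j')} (fun c hc hchain =>
          ⟨⋃₀ c, by
            rintro j ⟨A, hAc, hjA⟩ j' ⟨B, hBc, hj'B⟩ hne
            rcases eq_or_ne A B with rfl | hAB
            · exact hc hAc hjA hj'B hne
            · rcases hchain hAc hBc hAB with h | h
              · exact hc hBc (h hjA) hj'B hne
              · exact hc hAc hjA (h hj'B) hne,
           fun A hA => Set.subset_sUnion_of_mem hA⟩)
      by_cases hX : μ ≤ #X
      · exact ⟨∅, X, hX, fun j hj j' hj' hne =>
          Finset.disjoint_iff_inter_eq_empty.1 (hXmax.1 hj hj' hne)⟩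
      · exfalso
        push_neg at hX
        set U : Set ι' := ⋃ j ∈ X, ↑(s j) with hU
        have hUcard : #U < μ := by
          refine lt_of_le_of_lt (mk_biUnion_le _ _) ?_
          refine mul_lt_of_lt hreg.aleph0_le hX (lt_of_le_of_lt (ciSup_le' fun j => ?_) hμ)
          exact le_of_lt (lt_aleph0_of_finite _)
        set Bad : Set J := ⋃ x : U, {j : J | (x : ι') ∈ s j} with hBad
        have hBadcard : #Bad < μ := by
          refine lt_of_le_of_lt mk_iUnion_le_sum_mk ?_
          exact sum_lt_of_isRegular hreg hUcard (fun x => hbig x)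
        have hcover : (Set.univ : Set J) ⊆ X ∪ Bad := by
          intro j _
          by_contra h
          rw [Set.mem_union] at h
          push_neg at h
          obtain ⟨hjX, hjBad⟩ := h
          have hins : insert j X ∈
              {X : Set J | X.Pairwise fun j j' => Disjoint (s j) (s j')} := by
            refine Set.Pairwise.insert hXmax.1 ?_
            intro j' hj' hne
            have hdisj : Disjoint (s j) (s j') := by
              rw [Finset.disjoint_left]
              intro y hy hy'
              exact hjBad (Set.mem_iUnion.2 ⟨⟨y, Set.mem_biUnion hj' hy'⟩, hy⟩)
            exact ⟨hdisj, hdisj.symm⟩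
          have := hXmax.2 hins (Set.subset_insert j X)
          exact hjX (this (Set.mem_insert j X))
        have : #J ≤ #X + #Bad := by
          calc #J = #(Set.univ : Set J) := mk_univ.symm
          _ ≤ #(X ∪ Bad : Set J) := mk_le_mk_of_subset hcover
          _ ≤ #X + #Bad := mk_union_le _ _
        exact absurd (hJ.trans this) (not_le.2 (add_lt_of_lt hreg.aleph0_le hX hBadcard))

/-- If `M` is generated by a quantifier-free indiscernible sequence of length `κ ≥ μ`, where
`μ > λ ≥ |L| + ℵ₀` and `μ` is regular, then any sequence of `μ` distinct elements of `M` has a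
subsequence of length `μ` that is quantifier-free indiscernible over any given `A ⊆ M` with
`|A| < μ`. -/
theorem stmt4 {L : FirstOrder.Language.{u, u}} {M : Type u} [L.Structure M]
    (lam μ κ : Cardinal.{u}) (hL : L.card + ℵ₀ ≤ lam) (hμ : lam < μ) (hreg : μ.IsRegular)
    (hκ : μ ≤ κ) {ι : Type u} [LinearOrder ι] (hι : #ι = κ) (b : ι → M)
    (hind : QFIndiscernible L (∅ : Set M) b)
    (hgen : FirstOrder.Language.Substructure.closure L (Set.range b) = ⊤)
    (a : μ.ord.ToType → M) (hdist : Function.Injective a)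
    (A : Set M) (hA : #A < μ) :
    ∃ X : Set μ.ord.ToType, #X = μ ∧
      QFIndiscernible L A (fun x : X => a x) := by
  classical
  have hJ : #(μ.ord.ToType) = μ := mk_ord_toType μ
  have hlam : ℵ₀ ≤ lam := le_trans le_add_self hL
  have hμ0 : ℵ₀ < μ := lt_of_le_of_lt hlam hμ
  have hcardlam : L.card ≤ lam := le_trans le_self_add hL
  -- the sigma type of terms is small
  have hterm : #(Σ n : ULift.{u} ℕ, L.Term (Fin n.down)) < μ := by
    refine lt_of_le_of_lt ?_ hμ
    have h1 : ∀ n : ULift.{u} ℕ, #(L.Term (Fin n.down)) ≤ lam := by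
      intro n
      refine le_trans Language.Term.card_le (max_le hlam ?_)
      rw [mk_sum]
      have hfin : Cardinal.lift.{u} #(Fin n.down) ≤ ℵ₀ := by
        simp only [mk_fin, lift_natCast]
        exact (nat_lt_aleph0 _).le
      have hfun : Cardinal.lift.{0} #(Σ i, L.Functions i) ≤ L.card := by
        rw [Cardinal.lift_uzero]
        exact mk_le_of_injective Sum.inl_injective
      exact le_trans (add_le_add (hfin.trans hlam) (hfun.trans hcardlam))
        (Cardinal.add_eq_self hlam).le
    calc #(Σ n : ULift.{u} ℕ, L.Term (Fin n.down))
        = Cardinal.sum (fun n : ULift.{u} ℕ => #(L.Term (Fin n.down))) := mk_sigma _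
      _ ≤ Cardinal.sum (fun _ : ULift.{u} ℕ => lam) := Cardinal.sum_le_sum _ _ h1
      _ = #(ULift.{u} ℕ) * lam := sum_const' _ _
      _ ≤ lam * lam := by
          refine mul_le_mul' ?_ le_rfl
          simp only [mk_uLift, mk_denumerable, lift_aleph0]
          exact hlam
      _ = lam := Cardinal.mul_eq_self hlam
  -- choose representations of the sequence elements
  have hrep : ∀ j : μ.ord.ToType, ∃ p : Σ n : ULift.{u} ℕ, L.Term (Fin n.down),
      ∃ v : Fin p.1.down → ι, Function.Injective v ∧ p.2.realize (b ∘ v) = a j := by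
    intro j
    obtain ⟨n, t, v, hv, ht⟩ := rep_exists b hgen (a j)
    exact ⟨⟨⟨n⟩, t⟩, v, hv, ht⟩
  choose F hF using hrep
  obtain ⟨p₀, hp₀⟩ := Cardinal.infinite_pigeonhole_card F μ hJ.ge hreg.aleph0_le
    (by rw [hreg.cof_ord]; exact hterm)
  obtain ⟨⟨n₀⟩, t₀⟩ := p₀
  set S1 : Set μ.ord.ToType := F ⁻¹' {⟨⟨n₀⟩, t₀⟩} with hS1def
  have hS1 : ∀ (j : μ.ord.ToType), F j = ⟨⟨n₀⟩, t₀⟩ → ∃ v : Fin n₀ → ι,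
      Function.Injective v ∧ t₀.realize (b ∘ v) = a j := by
    intro j hj'
    have h := hF j
    rw [hj'] at h
    exact h
  have hS1' : ∀ j : S1, ∃ v : Fin n₀ → ι,
      Function.Injective v ∧ t₀.realize (b ∘ v) = a j.1 := fun j => hS1 j.1 j.2
  choose V hVinj hVreal using hS1'
  -- choose representations for elements of A, and the small support set
  have hrepA : ∀ x : A, ∃ p : Σ n : ULift.{u} ℕ, L.Term (Fin n.down),
      ∃ w : Fin p.1.down → ι, Function.Injective w ∧ p.2.realize (b ∘ w) = (x : M) := by
    intro x
    obtain ⟨n, t, w, hw, ht⟩ := rep_exists b hgen (x : M)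
    exact ⟨⟨⟨n⟩, t⟩, w, hw, ht⟩
  choose G W hWinj hWreal using hrepA
  set SA0 : Set ι := ⋃ x : A, Set.range (W x) with hSA0
  have hSA0card : #SA0 < μ := by
    refine lt_of_le_of_lt mk_iUnion_le_sum_mk ?_
    exact sum_lt_of_isRegular hreg hA fun x =>
      lt_of_lt_of_le (lt_aleph0_of_finite _) hμ0.le
  -- apply the Δ-system lemma
  obtain ⟨r, X1, hX1card, hX1pair⟩ := delta_system μ hreg hμ0 n₀ S1
    (fun j => Finset.image (V j) Finset.univ) hp₀
    (fun j => le_trans Finset.card_image_le (by simp))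
  -- pigeonhole on the root pattern
  set P : X1 → (Fin n₀ → Option r) :=
    fun j i => if h : V j.1 i ∈ r then some ⟨V j.1 i, h⟩ else none with hP
  obtain ⟨ρ, hρ⟩ := Cardinal.infinite_pigeonhole_card P μ hX1card hreg.aleph0_le
    (by rw [hreg.cof_ord]; exact lt_of_lt_of_le (lt_aleph0_of_finite _) hμ0.le)
  set X2 : Set X1 := P ⁻¹' {ρ} with hX2
  have hroot : ∀ j : X2, ∀ i (xr : r), ρ i = some xr → V j.1.1 i = (xr : ι) := by
    rintro j i xr hi
    have hj2 : P j.1 = ρ := j.2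
    have hPj : (if h : V j.1.1 i ∈ r then some (⟨V j.1.1 i, h⟩ : r) else none) = some xr := by
      have h2 := congrFun hj2 i
      rw [hi] at h2
      exact h2
    by_cases h : V j.1.1 i ∈ r
    · rw [dif_pos h] at hPj
      exact congrArg Subtype.val (Option.some_injective _ hPj)
    · rw [dif_neg h] at hPj
      exact absurd hPj (by simp)
  have hoffr : ∀ j : X2, ∀ i, ρ i = none → V j.1.1 i ∉ r := by
    rintro j i hi h
    have hj2 : P j.1 = ρ := j.2
    have hPj : (if h : V j.1.1 i ∈ r then some (⟨V j.1.1 i, h⟩ : r) else none) = none := by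
      have h2 := congrFun hj2 i
      rw [hi] at h2
      exact h2
    rw [dif_pos h] at hPj
    exact Option.some_ne_none _ hPj
  set Bad : Set X2 := {j | ∃ i, ρ i = none ∧ V j.1.1 i ∈ SA0} with hBad
  have hBadcard : #Bad < μ := by
    refine lt_of_le_of_lt ?_ hSA0card
    have hchoose : ∀ j : Bad, ∃ i, ρ i = none ∧ V j.1.1.1 i ∈ SA0 := fun j => j.2
    choose bi hbi1 hbi2 using hchoose
    refine mk_le_of_injective (f := fun j : Bad => (⟨V j.1.1.1 (bi j), hbi2 j⟩ : SA0)) ?_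
    intro j j' hjj'
    have heq : V j.1.1.1 (bi j) = V j'.1.1.1 (bi j') := congrArg Subtype.val hjj'
    by_contra hne
    have hne2 : j.1.1.1 ≠ j'.1.1.1 := by
      intro h
      exact hne (Subtype.ext (Subtype.ext (Subtype.ext h)))
    have hpair := hX1pair j.1.1.1 j.1.1.2 j'.1.1.1 j'.1.1.2 hne2
    have hmem : V j.1.1.1 (bi j) ∈
        Finset.image (V j.1.1.1) Finset.univ ∩ Finset.image (V j'.1.1.1) Finset.univ := by
      refine Finset.mem_inter.2 ⟨Finset.mem_image_of_mem _ (Finset.mem_univ _), ?_⟩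
      rw [heq]
      exact Finset.mem_image_of_mem _ (Finset.mem_univ _)
    rw [hpair] at hmem
    exact hoffr j.1 (bi j) (hbi1 j) hmem
  set Good : Set X2 := Set.univ \ Bad with hGood
  have hGoodcard : μ ≤ #Good := by
    by_contra h
    push_neg at h
    have h1 : (Set.univ : Set X2) ⊆ Good ∪ Bad := by
      intro j _
      by_cases hj : j ∈ Bad
      · exact Set.mem_union_right _ hj
      · exact Set.mem_union_left _ ⟨trivial, hj⟩
    have h2 : μ ≤ #(Good ∪ Bad : Set X2) := by
      refine le_trans ?_ (mk_le_mk_of_subset h1)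
      rw [mk_univ]
      exact hρ
    exact absurd (h2.trans (mk_union_le _ _))
      (not_le.2 (add_lt_of_lt hreg.aleph0_le h hBadcard))
  set emb : X2 → μ.ord.ToType := fun j => j.1.1.1 with hemb
  have hembinj : Function.Injective emb := by
    intro j j' h
    exact Subtype.ext (Subtype.ext (Subtype.ext h))
  set X : Set μ.ord.ToType := emb '' Good with hX
  have hXcard : #X = μ := by
    refine le_antisymm ((mk_set_le X).trans_eq hJ) ?_
    rw [hX, Cardinal.mk_image_eq hembinj]
    exact hGoodcard
  have hliftex : ∀ x : X, ∃ j : X2, j ∈ Good ∧ emb j = x.1 := fun x => by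
    obtain ⟨j, hj, hje⟩ := x.2
    exact ⟨j, hj, hje⟩
  choose lft hlftG hlftE using hliftex
  have hVXreal : ∀ x : X, t₀.realize (b ∘ V (lft x).1.1) = a x.1 := by
    intro x
    have h1 := hVreal (lft x).1.1
    have h2 : ((lft x).1.1 : μ.ord.ToType) = (x : μ.ord.ToType) := hlftE x
    rwa [h2] at h1
  have hVXroot : ∀ (x : X) i (xr : r), ρ i = some xr → V (lft x).1.1 i = (xr : ι) :=
    fun x i xr hi => hroot (lft x) i xr hi
  have hVXoff : ∀ (x : X) i, ρ i = none → V (lft x).1.1 i ∉ r ∧ V (lft x).1.1 i ∉ SA0 := by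
    intro x i hi
    refine ⟨hoffr (lft x) i hi, fun hmem => ?_⟩
    exact (hlftG x).2 ⟨i, hi, hmem⟩
  have hVXdis : ∀ (x x' : X), x ≠ x' → ∀ i i', ρ i = none → ρ i' = none →
      V (lft x).1.1 i ≠ V (lft x').1.1 i' := by
    intro x x' hne i i' hi hi' heq
    have hne2 : (lft x).1.1 ≠ (lft x').1.1 := by
      intro h
      apply hne
      apply Subtype.ext
      rw [← hlftE x, ← hlftE x']
      exact congrArg Subtype.val h
    have hpair := hX1pair (lft x).1.1 (lft x).1.2 (lft x').1.1 (lft x').1.2 hne2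
    have hmem : V (lft x).1.1 i ∈
        Finset.image (V (lft x).1.1) Finset.univ ∩
          Finset.image (V (lft x').1.1) Finset.univ := by
      refine Finset.mem_inter.2 ⟨Finset.mem_image_of_mem _ (Finset.mem_univ _), ?_⟩
      rw [heq]
      exact Finset.mem_image_of_mem _ (Finset.mem_univ _)
    rw [hpair] at hmem
    exact (hVXoff x i hi).1 hmem
  refine ⟨X, hXcard, ?_⟩
  intro k f g hf hg m as φ hφ
  -- the finite set of fixed indices used by the root and the parameters
  set Wfin : Finset ι := r ∪ Finset.univ.biUnion
      (fun p : Fin m => Finset.image (W (as p)) Finset.univ) with hWfin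
  -- variables: one for each (tuple position, non-root position), plus fixed indices
  set D := (Fin k × {i : Fin n₀ // ρ i = none}) ⊕ {x // x ∈ Wfin} with hD
  have hnotin : ∀ (x : X) (q : {i : Fin n₀ // ρ i = none}), V (lft x).1.1 q.1 ∉ Wfin := by
    intro x q hmem
    rcases Finset.mem_union.1 hmem with h1 | h1
    · exact (hVXoff x q.1 q.2).1 h1
    · obtain ⟨p, _, hp⟩ := Finset.mem_biUnion.1 h1
      obtain ⟨qq, _, hqq⟩ := Finset.mem_image.1 hp
      exact (hVXoff x q.1 q.2).2 (Set.mem_iUnion.2 ⟨as p, ⟨qq, hqq⟩⟩)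
  -- the index assignment associated to a tuple h : Fin k → X
  set u : (Fin k → X) → D → ι := fun h => Sum.elim
      (fun iq : Fin k × {i : Fin n₀ // ρ i = none} => V (lft (h iq.1)).1.1 iq.2.1)
      (fun x : {x // x ∈ Wfin} => (x : ι)) with hu
  have huinj : ∀ (h : Fin k → X), Function.Injective h → Function.Injective (u h) := by
    intro h hh d d' hdd'
    match d, d' with
    | Sum.inl (i, q), Sum.inl (i', q') =>
      have heq : V (lft (h i)).1.1 q.1 = V (lft (h i')).1.1 q'.1 := hdd'
      by_cases hii' : i = i'
      · subst hii'
        have := hVinj (lft (h i)).1.1 heq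
        rw [Subtype.ext this]
      · exact absurd heq (hVXdis (h i) (h i') (fun hc => hii' (hh hc)) q.1 q'.1 q.2 q'.2)
    | Sum.inl (i, q), Sum.inr x =>
      have heq : V (lft (h i)).1.1 q.1 = (x : ι) := hdd'
      exact absurd (show V (lft (h i)).1.1 q.1 ∈ Wfin by rw [heq]; exact x.2) (hnotin (h i) q)
    | Sum.inr x, Sum.inl (i, q) =>
      have heq : (x : ι) = V (lft (h i)).1.1 q.1 := hdd'
      exact absurd (show V (lft (h i)).1.1 q.1 ∈ Wfin by rw [← heq]; exact x.2) (hnotin (h i) q)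
    | Sum.inr x, Sum.inr x' =>
      rw [Subtype.ext hdd']
  -- variable substitution for positions of the tuple
  set σ : Fin k → Fin n₀ → D := fun i q =>
    if hq : ρ q = none then Sum.inl (i, ⟨q, hq⟩)
    else Sum.inr ⟨(((ρ q).get (Option.ne_none_iff_isSome.1 hq)) : ι),
      Finset.mem_union_left _ ((ρ q).get (Option.ne_none_iff_isSome.1 hq)).2⟩ with hσ
  set τ : (p : Fin m) → Fin (G (as p)).1.down → D := fun p q =>
    Sum.inr ⟨W (as p) q, Finset.mem_union_right _ (Finset.mem_biUnion.2
      ⟨p, Finset.mem_univ _, Finset.mem_image_of_mem _ (Finset.mem_univ _)⟩)⟩ with hτ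
  set θ : Fin k ⊕ Fin m → L.Term D := Sum.elim (fun i => t₀.relabel (σ i))
      (fun p => ((G (as p)).2).relabel (τ p)) with hθ
  set ψ : L.Formula D := φ.subst θ with hψdef
  have hψqf : ψ.IsQF := isQF_subst hφ θ
  set N := Fintype.card D with hN
  set e : D ≃ Fin N := Fintype.equivFin D with he
  set φhat : L.Formula (Fin N ⊕ Fin 0) :=
    ψ.relabel (fun d => (Sum.inl (e d) : Fin N ⊕ Fin 0)) with hφhat
  have hφhatqf : φhat.IsQF := hψqf.relabel _
  -- key computation
  have hucomp : ∀ (h : Fin k → X) (i : Fin k), (u h) ∘ (σ i) = V (lft (h i)).1.1 := by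
    intro h i
    funext q
    simp only [Function.comp_apply]
    by_cases hq : ρ q = none
    · rw [hσ]
      simp only [dif_pos hq]
      rfl
    · rw [hσ]
      simp only [dif_neg hq]
      have := hVXroot (h i) q ((ρ q).get (Option.ne_none_iff_isSome.1 hq))
        (Option.some_get (Option.ne_none_iff_isSome.1 hq)).symm
      exact (this.symm.trans rfl)
  have key : ∀ (h : Fin k → X), Function.Injective h →
      ((fun sv => (θ sv).realize (b ∘ u h)) =
        Sum.elim ((fun x : X => a x) ∘ h) (fun p => ((as p : M)))) := by
    intro h hh
    funext sv
    cases sv with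
    | inl i =>
      show (t₀.relabel (σ i)).realize (b ∘ u h) = a ↑(h i)
      rw [Language.Term.realize_relabel, Function.comp_assoc, hucomp h i]
      exact hVXreal (h i)
    | inr p =>
      show (((G (as p)).2).relabel (τ p)).realize (b ∘ u h) = ↑(as p)
      rw [Language.Term.realize_relabel]
      have h2 : (b ∘ u h) ∘ τ p = b ∘ W (as p) := rfl
      rw [h2]
      exact hWreal (as p)
  have hreal : ∀ (h : Fin k → X), Function.Injective h →
      (φhat.Realize (Sum.elim (b ∘ (u h ∘ ⇑e.symm))
          (fun i : Fin 0 => ((i.elim0 : (∅ : Set M)) : M))) ↔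
        φ.Realize (Sum.elim ((fun x : X => a x) ∘ h) (fun p => ((as p : M))))) := by
    intro h hh
    rw [hφhat, Language.Formula.realize_relabel]
    have hcomp : (Sum.elim (b ∘ (u h ∘ ⇑e.symm))
        (fun i : Fin 0 => ((i.elim0 : (∅ : Set M)) : M))) ∘
          (fun d => (Sum.inl (e d) : Fin N ⊕ Fin 0)) = b ∘ u h := by
      funext d
      simp
    rw [hcomp, hψdef]
    have := Language.BoundedFormula.realize_subst (φ := φ) (tf := θ) (v := b ∘ u h)
      (xs := default)
    rw [Language.Formula.Realize, this, key h hh]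
    rfl
  have hmain := hind N (u f ∘ ⇑e.symm) (u g ∘ ⇑e.symm)
    ((huinj f hf).comp e.symm.injective) ((huinj g hg).comp e.symm.injective)
    0 (fun i => i.elim0) φhat hφhatqf
  rw [hreal f hf, hreal g hg] at hmain
  exact hmain
end

section
/- Let (X, cl) be a modular pregeometry, and let Y, Z be closed subsets of X. If Y₀ is a basis of Y ∩ Z extended to a basis Y₀ ∪ Y₁ of Y, and further extended by Z₁ to a basis of cl(Y ∪ Z), then Y₀ ∪ Z₁ spans Z; in particular Y and Z are independent over Y ∩ Z. -/
/-- In a modular pregeometry, if `Y, Z` are closed sets, `Y₀` is a basis of `Y ∩ Z` extended to a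
basis `Y₀ ∪ Y₁` of `Y` and further extended by `Z₁ ⊆ Z` to a basis of `cl (Y ∪ Z)`, then
`Y₀ ∪ Z₁` spans `Z`; in particular `Y` and `Z` are independent over `Y ∩ Z`. -/
theorem stmt6 {X : Type*} (cl : Set X → Set X)
    (hmono : ∀ A B : Set X, A ⊆ B → cl A ⊆ cl B)
    (hext : ∀ A : Set X, A ⊆ cl A)
    (hidem : ∀ A : Set X, cl (cl A) = cl A)
    (hfin : ∀ (A : Set X) (x : X), x ∈ cl A → ∃ F ⊆ A, F.Finite ∧ x ∈ cl F)
    (hexch : ∀ (A : Set X) (a b : X), a ∈ cl (A ∪ {b}) → a ∉ cl A → b ∈ cl (A ∪ {a}))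
    -- modularity: any two closed sets are independent over their intersection
    (hmodular : ∀ Y Z : Set X, cl Y = Y → cl Z = Z →
      ∀ S ⊆ Y, (∀ s ∈ S, s ∉ cl ((Y ∩ Z) ∪ (S \ {s}))) → ∀ s ∈ S, s ∉ cl (Z ∪ (S \ {s})))
    (Y Z : Set X) (hY : cl Y = Y) (hZ : cl Z = Z)
    (Y₀ Y₁ Z₁ : Set X)
    -- `Y₀` is a basis of `Y ∩ Z`
    (hY₀sub : Y₀ ⊆ Y ∩ Z) (hY₀span : Y ∩ Z ⊆ cl Y₀)
    (hY₀ind : ∀ s ∈ Y₀, s ∉ cl (Y₀ \ {s}))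
    -- extended to a basis `Y₀ ∪ Y₁` of `Y`
    (hY₁sub : Y₀ ∪ Y₁ ⊆ Y) (hY₁span : Y ⊆ cl (Y₀ ∪ Y₁))
    (hY₁ind : ∀ s ∈ Y₀ ∪ Y₁, s ∉ cl ((Y₀ ∪ Y₁) \ {s}))
    -- further extended by `Z₁ ⊆ Z` to a basis of `cl (Y ∪ Z)`
    (hZ₁sub : Z₁ ⊆ Z) (hZ₁span : cl (Y ∪ Z) ⊆ cl (Y₀ ∪ Y₁ ∪ Z₁))
    (hZ₁ind : ∀ s ∈ Y₀ ∪ Y₁ ∪ Z₁, s ∉ cl ((Y₀ ∪ Y₁ ∪ Z₁) \ {s})) :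
    Z ⊆ cl (Y₀ ∪ Z₁) ∧
      (∀ S ⊆ Y, (∀ s ∈ S, s ∉ cl ((Y ∩ Z) ∪ (S \ {s}))) → ∀ s ∈ S, s ∉ cl (Z ∪ (S \ {s}))) := by
  have hmod := hmodular Y Z hY hZ
  refine ⟨?_, hmod⟩
  -- S := Y₁ \ Y₀ is independent over Z
  set S : Set X := Y₁ \ Y₀ with hSdef
  have hScl : ∀ s ∈ S, s ∉ cl (Z ∪ (S \ {s})) := by
    apply hmod S (fun s hs => hY₁sub (Or.inr hs.1))
    intro s hs hcl
    apply hY₁ind s (Or.inr hs.1)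
    have h1 : (Y ∩ Z) ∪ (S \ {s}) ⊆ cl ((Y₀ ∪ Y₁) \ {s}) := by
      rintro x (hx | hx)
      · have hx0 : x ∈ cl Y₀ := hY₀span hx
        have hsub : Y₀ ⊆ (Y₀ ∪ Y₁) \ {s} := fun t ht =>
          ⟨Or.inl ht, fun he => hs.2 ((Set.mem_singleton_iff.mp he) ▸ ht)⟩
        exact hmono _ _ hsub hx0
      · exact hext _ ⟨Or.inr hx.1.1, hx.2⟩
    have h2 := hmono _ _ h1 hcl
    rwa [hidem] at h2
  intro z hz
  -- z ∈ cl (Y₀ ∪ Y₁ ∪ Z₁)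
  have hz1 : z ∈ cl (Y₀ ∪ Y₁ ∪ Z₁) := hZ₁span (hext _ (Or.inr hz))
  obtain ⟨F', hF'sub, hF'fin, hzF'⟩ := hfin _ z hz1
  -- F := F' ∩ S is finite, F' ⊆ F ∪ (Y₀ ∪ Z₁)
  have key : ∀ n : ℕ, ∀ F : Set X, F.Finite → F.ncard ≤ n → F ⊆ S →
      z ∈ cl (F ∪ (Y₀ ∪ Z₁)) → z ∈ cl (Y₀ ∪ Z₁) := by
    intro n
    induction n with
    | zero =>
      intro F hFfin hFcard hFS hzF
      have : F = ∅ := by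
        rw [← Set.ncard_eq_zero hFfin]; omega
      rwa [this, Set.empty_union] at hzF
    | succ n ih =>
      intro F hFfin hFcard hFS hzF
      rcases Set.eq_empty_or_nonempty F with rfl | ⟨y, hy⟩
      · rwa [Set.empty_union] at hzF
      by_cases hz' : z ∈ cl ((F \ {y}) ∪ (Y₀ ∪ Z₁))
      · refine ih (F \ {y}) hFfin.diff ?_ (fun t ht => hFS ht.1) hz'
        have := Set.ncard_diff_singleton_lt_of_mem hy hFfin
        omega
      · -- exchange: y ∈ cl ((F \ {y}) ∪ (Y₀ ∪ Z₁) ∪ {z})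
        exfalso
        have heq : F ∪ (Y₀ ∪ Z₁) = ((F \ {y}) ∪ (Y₀ ∪ Z₁)) ∪ {y} := by
          ext x
          simp only [Set.mem_union, Set.mem_diff, Set.mem_singleton_iff]
          constructor
          · rintro (hx | hx)
            · by_cases hxy : x = y
              · exact Or.inr hxy
              · exact Or.inl (Or.inl ⟨hx, hxy⟩)
            · exact Or.inl (Or.inr hx)
          · rintro ((hx | hx) | hx)
            · exact Or.inl hx.1
            · exact Or.inr hx
            · exact Or.inl (hx ▸ hy)
        rw [heq] at hzF
        have hy' := hexch _ z y hzF hz'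
        -- y ∈ cl ((F \ {y}) ∪ (Y₀ ∪ Z₁) ∪ {z}) ⊆ cl (Z ∪ (S \ {y}))
        have hsub : ((F \ {y}) ∪ (Y₀ ∪ Z₁)) ∪ {z} ⊆ Z ∪ (S \ {y}) := by
          rintro x ((hx | (hx | hx)) | hx)
          · exact Or.inr ⟨hFS hx.1, hx.2⟩
          · exact Or.inl (hY₀sub hx).2
          · exact Or.inl (hZ₁sub hx)
          · exact Or.inl (hx ▸ hz)
        exact hScl y (hFS hy) (hmono _ _ hsub hy')
  refine key (F' ∩ S).ncard (F' ∩ S) (hF'fin.inter_of_left _) le_rfl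
    Set.inter_subset_right (hmono _ _ ?_ hzF')
  rintro x hx
  by_cases hxS : x ∈ S
  · exact Or.inl ⟨hx, hxS⟩
  · rcases hF'sub hx with (hx0 | hx0) | hx0
    · exact Or.inr (Or.inl hx0)
    · -- x ∈ Y₁ but x ∉ S means x ∈ Y₀
      by_cases hxY₀ : x ∈ Y₀
      · exact Or.inr (Or.inl hxY₀)
      · exact absurd ⟨hx0, hxY₀⟩ hxS
    · exact Or.inr (Or.inr hx0)
end

section
/- Let (X, cl) be a pregeometry arising from a group G of permutations of X via fixed-point closure, where for finite Y ⊆ X, cl(Y) is the set of points fixed by the pointwise stabilizer G_Y. Suppose G is hereditarily transitive. Then for any finite Y and any x, y ∈ X with x ∉ cl(Y): y ∈ cl(Y ∪ {x}) and y ∉ cl(Y) implies x ∈ cl(Y ∪ {y}). -/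
/-- The fixed-point closure: points of `X` fixed by every element of the pointwise
stabilizer of `Y` in `G`. -/
def fixCl (G : Type*) {X : Type*} [Group G] [MulAction G X] (Y : Set X) : Set X :=
  {x | ∀ g : G, (∀ a ∈ Y, g • a = a) → g • x = x}

/-- Exchange for the fixed-point closure of a hereditarily transitive permutation group: if `G`
is hereditarily transitive on `X`, `Y` is finite, `x ∉ cl Y`, `y ∈ cl (Y ∪ {x})` and `y ∉ cl Y`,
then `x ∈ cl (Y ∪ {y})`. -/
theorem stmt15 {G X : Type*} [Group G] [MulAction G X]
    (htrans : ∀ (Y : Finset X) (x y : X), x ∉ fixCl G (↑Y : Set X) →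
      y ∉ fixCl G (↑Y : Set X) → ∃ g : G, (∀ a ∈ Y, g • a = a) ∧ g • x = y)
    (Y : Finset X) (x y : X)
    (hx : x ∉ fixCl G (↑Y : Set X))
    (hy1 : y ∈ fixCl G ((↑Y : Set X) ∪ {x}))
    (hy2 : y ∉ fixCl G (↑Y : Set X)) :
    x ∈ fixCl G ((↑Y : Set X) ∪ {y}) := by
  classical
  have hset : (↑(insert y Y) : Set X) = (↑Y : Set X) ∪ {y} := by
    rw [Finset.coe_insert, Set.insert_eq, Set.union_comm]
  intro g hg
  have hgY : ∀ a ∈ Y, g • a = a := fun a ha => hg a (Or.inl ha)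
  have hgy : g • y = y := hg y (Or.inr rfl)
  -- find f fixing Y with f • y = x
  obtain ⟨f, hfY, hfyx⟩ := htrans Y y x hy2 hx
  by_cases hfx : f • x ∈ fixCl G ((↑Y : Set X) ∪ {y})
  · -- f⁻¹ * g * f fixes Y ∪ {x}, hence fixes y, hence g • x = x
    have h1 : g • (f • x) = f • x := hfx g hg
    have hk : ∀ a ∈ (↑Y : Set X) ∪ {x}, (f⁻¹ * g * f) • a = a := by
      rintro a (ha | rfl)
      · have hfa : f • a = a := hfY a ha
        have hga : g • a = a := hgY a ha
        calc (f⁻¹ * g * f) • a = f⁻¹ • g • f • a := by rw [mul_smul, mul_smul]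
          _ = f⁻¹ • (f • a) := by rw [hfa, hga]
          _ = a := inv_smul_smul f a
      · calc (f⁻¹ * g * f) • a = f⁻¹ • g • f • a := by rw [mul_smul, mul_smul]
          _ = f⁻¹ • (f • a) := by rw [h1]
          _ = a := inv_smul_smul f a
    have hky : (f⁻¹ * g * f) • y = y := hy1 _ hk
    have : g • (f • y) = f • y := by
      have := hky
      rw [mul_smul, mul_smul] at this
      calc g • (f • y) = f • f⁻¹ • g • f • y := by rw [smul_inv_smul]
        _ = f • y := by rw [this]
    rw [hfyx] at this
    exact this
  · by_cases hxcl : x ∈ fixCl G ((↑Y : Set X) ∪ {y})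
    · exact hxcl g hg
    · -- get h fixing Y ∪ {y} with h • x = f • x, deduce f • y = y so x = y
      obtain ⟨h, hhY', hhx⟩ := htrans (insert y Y) x (f • x)
        (by rw [hset]; exact hxcl) (by rw [hset]; exact hfx)
      have hhy : h • y = y := hhY' y (Finset.mem_insert_self y Y)
      have hhYa : ∀ a ∈ Y, h • a = a := fun a ha => hhY' a (Finset.mem_insert_of_mem ha)
      have hk : ∀ a ∈ (↑Y : Set X) ∪ {x}, (h⁻¹ * f) • a = a := by
        rintro a (ha | rfl)
        · calc (h⁻¹ * f) • a = h⁻¹ • f • a := mul_smul _ _ _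
            _ = h⁻¹ • (h • a) := by rw [hfY a ha, hhYa a ha]
            _ = a := inv_smul_smul h a
        · calc (h⁻¹ * f) • a = h⁻¹ • f • a := mul_smul _ _ _
            _ = h⁻¹ • (h • a) := by rw [hhx]
            _ = a := inv_smul_smul h a
      have hky : (h⁻¹ * f) • y = y := hy1 _ hk
      have hfy : f • y = y := by
        rw [mul_smul] at hky
        calc f • y = h • h⁻¹ • f • y := (smul_inv_smul h _).symm
          _ = h • y := by rw [hky]
          _ = y := hhy
      -- so x = y
      have hxy : x = y := by rw [← hfyx, hfy]
      rw [hxy]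
      exact hgy
end
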